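/- Let A = UΣUᵀ be the ground truth from the context, let r ≥ r_A, let X ∈ St(m,r), let Δ ∈ ℝ^{m×m} be any matrix, and set Θ = XᵀAX − XᵀΔX. If ρ ≥ 0 and Tr(I_{r_A} − UᵀXXᵀU) ≤ ρ, then ‖XΘXᵀ − A‖_F ≤ 2√ρ + ‖Δ‖_F. -/

import Mathlib

open Matrix MeasureTheory ProbabilityTheory BigOperators

noncomputable section

/-- Frobenius norm of a real matrix. -/
def frob {m n : ℕ} (M : Matrix (Fin m) (Fin n) ℝ) : ℝ :=
  Real.sqrt (∑ i, ∑ j, (M i j) ^ 2)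

/-- Euclidean norm of a vector in `ℝⁿ`. -/
def vnorm {n : ℕ} (v : Fin n → ℝ) : ℝ :=
  Real.sqrt (∑ i, (v i) ^ 2)

/-- Spectral norm (operator 2-norm) of a real matrix. -/
def spec {m n : ℕ} (M : Matrix (Fin m) (Fin n) ℝ) : ℝ :=
  ‖LinearMap.toContinuousLinearMap (Matrix.toEuclideanLin M)‖

theorem isHermitian_tmul {m n : ℕ} (M : Matrix (Fin m) (Fin n) ℝ) :
    (Mᵀ * M).IsHermitian := by
  simpa [Matrix.conjTranspose_eq_transpose_of_trivial] using
    Matrix.isHermitian_conjTranspose_mul_self M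

theorem posSemidef_tmul {m n : ℕ} (M : Matrix (Fin m) (Fin n) ℝ) :
    (Mᵀ * M).PosSemidef := by
  simpa [Matrix.conjTranspose_eq_transpose_of_trivial] using
    Matrix.posSemidef_conjTranspose_mul_self M

/-- The `i`-th largest singular value (1-indexed) of a real matrix, i.e. the square root of the
`i`-th largest eigenvalue of `MᵀM`; junk value `0` when `i` is out of range. -/
def svalue {m n : ℕ} (M : Matrix (Fin m) (Fin n) ℝ) (i : ℕ) : ℝ :=
  if h : 1 ≤ i ∧ i ≤ n then
    Real.sqrt ((isHermitian_tmul M).eigenvalues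
      (Tuple.sort (isHermitian_tmul M).eigenvalues ⟨n - i, by omega⟩))
  else 0

/-- Membership in the Stiefel manifold `St(m,r)`. -/
def Stiefel {m r : ℕ} (X : Matrix (Fin m) (Fin r) ℝ) : Prop :=
  Xᵀ * X = 1

/-- The Loewner order on (symmetric) real matrices: `A ⪯ B`. -/
def loewnerLE {m : ℕ} (A B : Matrix (Fin m) (Fin m) ℝ) : Prop :=
  (B - A).PosSemidef

/-- The inverse of the positive semidefinite square root of a matrix (junk value `0` when the
matrix is not positive semidefinite). -/
def sqrtInv {r : ℕ} (S : Matrix (Fin r) (Fin r) ℝ) : Matrix (Fin r) (Fin r) ℝ :=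
  haveI := Classical.propDecidable S.PosSemidef
  if h : S.PosSemidef then
    (h.1.eigenvectorUnitary.1 * diagonal (RCLike.ofReal ∘ Real.sqrt ∘ h.1.eigenvalues) *
      (star h.1.eigenvectorUnitary : Matrix (Fin r) (Fin r) ℝ))⁻¹ else 0

/-- The linear sensing map `𝓜` determined by feature matrices `M_i`:
`𝓜(B)_i = Tr(M_iᵀ B)`. -/
def calM {m n : ℕ} (Ms : Fin n → Matrix (Fin m) (Fin m) ℝ)
    (B : Matrix (Fin m) (Fin m) ℝ) : Fin n → ℝ :=
  fun i => ((Ms i)ᵀ * B).trace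

/-- The adjoint `𝓜*` of the sensing map: `𝓜*(y) = ∑ i, y_i M_i`. -/
def calMadj {m n : ℕ} (Ms : Fin n → Matrix (Fin m) (Fin m) ℝ)
    (y : Fin n → ℝ) : Matrix (Fin m) (Fin m) ℝ :=
  ∑ i, y i • Ms i

/-- `(𝓜*𝓜 − 𝓘)(B)`. -/
def calE {m n : ℕ} (Ms : Fin n → Matrix (Fin m) (Fin m) ℝ)
    (B : Matrix (Fin m) (Fin m) ℝ) : Matrix (Fin m) (Fin m) ℝ :=
  calMadj Ms (calM Ms B) - B

/-- The `(s, δ)`-restricted isometry property for the sensing map determined by `Ms`. -/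
def IsRIP {m n : ℕ} (Ms : Fin n → Matrix (Fin m) (Fin m) ℝ) (s : ℕ) (δ : ℝ) : Prop :=
  ∀ B : Matrix (Fin m) (Fin m) ℝ, B.IsSymm → B.rank ≤ s →
    (1 - δ) * frob B ^ 2 ≤ vnorm (calM Ms B) ^ 2 ∧
      vnorm (calM Ms B) ^ 2 ≤ (1 + δ) * frob B ^ 2

/-- The Riemannian gradient on the Stiefel manifold obtained from the Euclidean gradient `g`
at the point `X`. -/
def Rgrad {m r : ℕ} (X g : Matrix (Fin m) (Fin r) ℝ) : Matrix (Fin m) (Fin r) ℝ :=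
  (1 - X * Xᵀ) * g + (2⁻¹ : ℝ) • (X * (Xᵀ * g - gᵀ * X))

/-- One step of Riemannian gradient descent (with `μ = 2`) for the weight-normalized
matrix sensing problem. -/
def RGDstep {m r n : ℕ} (Ms : Fin n → Matrix (Fin m) (Fin m) ℝ)
    (A : Matrix (Fin m) (Fin m) ℝ) (η : ℝ)
    (p : Matrix (Fin m) (Fin r) ℝ × Matrix (Fin r) (Fin r) ℝ) :
    Matrix (Fin m) (Fin r) ℝ × Matrix (Fin r) (Fin r) ℝ :=
  let X := p.1
  let Θ := p.2
  let Gt := calMadj Ms (calM Ms (X * Θ * Xᵀ - A)) * X * Θ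
  let G := Rgrad X Gt
  let X' := (X - η • G) * sqrtInv (1 + η ^ 2 • (Gᵀ * G))
  let Θ' := X'ᵀ * A * X' - X'ᵀ * calE Ms (X' * Θ * X'ᵀ - A) * X'
  (X', Θ')

/-- The standard Gaussian ensemble on `m × r` real matrices (i.i.d. `N(0,1)` entries). -/
def gaussianEnsemble (m r : ℕ) : Measure (Fin m → Fin r → ℝ) :=
  Measure.pi fun _ : Fin m => Measure.pi fun _ : Fin r => gaussianReal 0 1

end

noncomputable section


namespace MyAux

lemma frob_nonneg {m n : ℕ} (M : Matrix (Fin m) (Fin n) ℝ) : 0 ≤ frob M :=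
  Real.sqrt_nonneg _

lemma frob_eq_norm {m n : ℕ} (M : Matrix (Fin m) (Fin n) ℝ) :
    frob M = ‖(EuclideanSpace.equiv (Fin m × Fin n) ℝ).symm (fun p => M p.1 p.2)‖ := by
  rw [EuclideanSpace.norm_eq]
  simp [frob, Fintype.sum_prod_type, Real.norm_eq_abs, sq_abs]

lemma frob_add_le {m n : ℕ} (B C : Matrix (Fin m) (Fin n) ℝ) :
    frob (B + C) ≤ frob B + frob C := by
  rw [frob_eq_norm, frob_eq_norm, frob_eq_norm]
  have h : ((EuclideanSpace.equiv (Fin m × Fin n) ℝ).symm (fun p => (B + C) p.1 p.2))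
      = (EuclideanSpace.equiv (Fin m × Fin n) ℝ).symm (fun p => B p.1 p.2)
        + (EuclideanSpace.equiv (Fin m × Fin n) ℝ).symm (fun p => C p.1 p.2) := by
    rw [← map_add]; rfl
  rw [h]
  exact norm_add_le _ _

lemma frob_sq {m n : ℕ} (M : Matrix (Fin m) (Fin n) ℝ) :
    frob M ^ 2 = (Mᵀ * M).trace := by
  rw [frob, Real.sq_sqrt (by positivity)]
  rw [Matrix.trace]
  simp only [Matrix.diag, Matrix.mul_apply, Matrix.transpose_apply, sq]
  exact Finset.sum_comm

lemma diag_nonneg_of_psd {k : ℕ} {S : Matrix (Fin k) (Fin k) ℝ} (hS : S.PosSemidef)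
    (i : Fin k) : 0 ≤ S i i := by
  have h := hS.dotProduct_mulVec_nonneg (Pi.single i 1)
  simpa [dotProduct, Matrix.mulVec, Pi.single_apply, Finset.mul_sum] using h

lemma trace_nonneg_of_psd {k : ℕ} {S : Matrix (Fin k) (Fin k) ℝ} (hS : S.PosSemidef) :
    0 ≤ S.trace :=
  Finset.sum_nonneg fun i _ => diag_nonneg_of_psd hS i

lemma frob_le_frob {m n : ℕ} {B C : Matrix (Fin m) (Fin n) ℝ}
    (h : (Bᵀ * B).trace ≤ (Cᵀ * C).trace) : frob B ≤ frob C := by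
  have h2 : frob B ^ 2 ≤ frob C ^ 2 := by rw [frob_sq, frob_sq]; exact h
  nlinarith [frob_nonneg B, frob_nonneg C]

lemma proj_key {m r : ℕ} (X : Matrix (Fin m) (Fin r) ℝ) (hX : Xᵀ * X = 1) :
    (1 - X * Xᵀ)ᵀ * (1 - X * Xᵀ) = 1 - X * Xᵀ := by
  have hPP : X * Xᵀ * (X * Xᵀ) = X * Xᵀ := by
    calc X * Xᵀ * (X * Xᵀ) = X * (Xᵀ * X) * Xᵀ := by simp only [Matrix.mul_assoc]
      _ = X * Xᵀ := by rw [hX, Matrix.mul_one]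
  simp only [Matrix.transpose_sub, Matrix.transpose_one, Matrix.transpose_mul,
    Matrix.transpose_transpose, Matrix.sub_mul, Matrix.mul_sub, Matrix.one_mul,
    Matrix.mul_one, hPP]
  abel

lemma psd_one_sub_proj {m r : ℕ} (X : Matrix (Fin m) (Fin r) ℝ) (hX : Xᵀ * X = 1) :
    (1 - X * Xᵀ).PosSemidef := by
  have h2 := posSemidef_tmul (1 - X * Xᵀ)
  rwa [proj_key X hX] at h2

lemma psd_conj {k l : ℕ} {S : Matrix (Fin k) (Fin k) ℝ} (hS : S.PosSemidef)
    (B : Matrix (Fin k) (Fin l) ℝ) : (Bᵀ * S * B).PosSemidef := by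
  have := hS.conjTranspose_mul_mul_same B
  simpa [Matrix.conjTranspose_eq_transpose_of_trivial] using this

lemma frob_proj_left {m r k : ℕ} (X : Matrix (Fin m) (Fin r) ℝ) (hX : Xᵀ * X = 1)
    (M : Matrix (Fin m) (Fin k) ℝ) : frob (X * Xᵀ * M) ≤ frob M := by
  apply frob_le_frob
  have e1 : (X * Xᵀ * M)ᵀ * (X * Xᵀ * M) = Mᵀ * ((X * Xᵀ) * M) := by
    have h3 : Xᵀ * (X * (Xᵀ * M)) = Xᵀ * M := by
      rw [← Matrix.mul_assoc, hX, Matrix.one_mul]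
    simp only [Matrix.transpose_mul, Matrix.transpose_transpose, Matrix.mul_assoc, h3]
  rw [e1]
  have key : Mᵀ * M - Mᵀ * (X * Xᵀ * M) = Mᵀ * (1 - X * Xᵀ) * M := by
    simp [Matrix.mul_sub, Matrix.sub_mul, Matrix.mul_assoc]
  have hpsd : (Mᵀ * (1 - X * Xᵀ) * M).PosSemidef := psd_conj (psd_one_sub_proj X hX) M
  have h4 := trace_nonneg_of_psd hpsd
  rw [← key, Matrix.trace_sub] at h4
  linarith

lemma frob_transpose {m n : ℕ} (M : Matrix (Fin m) (Fin n) ℝ) : frob Mᵀ = frob M := by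
  rw [frob, frob]
  congr 1
  exact Finset.sum_comm

lemma frob_neg {m n : ℕ} (M : Matrix (Fin m) (Fin n) ℝ) : frob (-M) = frob M := by
  simp [frob]

lemma frob_proj_right {m r k : ℕ} (X : Matrix (Fin m) (Fin r) ℝ) (hX : Xᵀ * X = 1)
    (M : Matrix (Fin k) (Fin m) ℝ) : frob (M * (X * Xᵀ)) ≤ frob M := by
  have h5 : frob (M * (X * Xᵀ)) = frob (X * Xᵀ * Mᵀ) := by
    rw [← frob_transpose (M * (X * Xᵀ))]
    congr 1
    simp [Matrix.transpose_mul, Matrix.mul_assoc]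
  rw [h5, ← frob_transpose M]
  exact frob_proj_left X hX Mᵀ

lemma d_le_one {r_A : ℕ} (h1 : 1 ≤ r_A) (d : Fin r_A → ℝ)
    (hσ1 : svalue (Matrix.diagonal d) 1 = 1) (i : Fin r_A) : d i ≤ 1 := by
  set Sg := Matrix.diagonal d with hSg
  have he := isHermitian_tmul Sg
  have hH : Sgᵀ * Sg = Matrix.diagonal (fun i => d i * d i) := by
    rw [hSg, Matrix.diagonal_transpose, Matrix.diagonal_mul_diagonal]
  have hmem : d i * d i ∈ spectrum ℝ (Sgᵀ * Sg) := by
    rw [hH, spectrum_diagonal]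
    exact ⟨i, rfl⟩
  rw [he.spectrum_real_eq_range_eigenvalues] at hmem
  obtain ⟨j, hj⟩ := hmem
  have hcond : 1 ≤ 1 ∧ 1 ≤ r_A := ⟨le_refl 1, h1⟩
  rw [svalue, dif_pos hcond] at hσ1
  have htop : (isHermitian_tmul Sg).eigenvalues
      (Tuple.sort (isHermitian_tmul Sg).eigenvalues ⟨r_A - 1, by omega⟩) = 1 :=
    Real.sqrt_eq_one.mp hσ1
  have hmono := Tuple.monotone_sort (isHermitian_tmul Sg).eigenvalues
  set σ := Tuple.sort (isHermitian_tmul Sg).eigenvalues with hσdef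
  have hle : σ.symm j ≤ (⟨r_A - 1, by omega⟩ : Fin r_A) := by
    have := (σ.symm j).isLt
    rw [Fin.le_def]
    simp only []
    omega
  have h2 : (isHermitian_tmul Sg).eigenvalues j
      ≤ (isHermitian_tmul Sg).eigenvalues (σ ⟨r_A - 1, by omega⟩) := by
    have := hmono hle
    simpa using this
  have h3 : d i * d i ≤ 1 := by
    rw [htop] at h2
    exact hj.symm.trans_le h2
  nlinarith

lemma trace_sandwich {k : ℕ} (d : Fin k → ℝ) (hd0 : ∀ i, 0 ≤ d i) (hd1 : ∀ i, d i ≤ 1)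
    {M : Matrix (Fin k) (Fin k) ℝ} (hM : M.PosSemidef) :
    (Matrix.diagonal d * M * Matrix.diagonal d).trace ≤ M.trace := by
  rw [Matrix.trace, Matrix.trace]
  apply Finset.sum_le_sum
  intro i _
  have he : (Matrix.diagonal d * M * Matrix.diagonal d).diag i = d i * M i i * d i := by
    simp [Matrix.diag, Matrix.mul_diagonal, Matrix.diagonal_mul]
  rw [he]
  show d i * M i i * d i ≤ M i i
  have h0 := diag_nonneg_of_psd hM i
  have hdd : 0 ≤ 1 - d i * d i := by nlinarith [hd0 i, hd1 i]
  nlinarith [mul_nonneg h0 hdd]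

end MyAux

theorem stmt3 {m r r_A : ℕ} (h1 : 1 ≤ r_A) (h2 : r_A ≤ r)
    (κ : ℝ) (hκ : 1 ≤ κ)
    (U : Matrix (Fin m) (Fin r_A) ℝ) (hU : Stiefel U)
    (d : Fin r_A → ℝ) (hd : ∀ i, 0 < d i)
    (Sg : Matrix (Fin r_A) (Fin r_A) ℝ) (hSg : Sg = Matrix.diagonal d)
    (hσ1 : svalue Sg 1 = 1) (hσr : svalue Sg r_A = 1 / κ)
    (A : Matrix (Fin m) (Fin m) ℝ) (hA : A = U * Sg * Uᵀ)
    (X : Matrix (Fin m) (Fin r) ℝ) (hX : Stiefel X)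
    (Δ : Matrix (Fin m) (Fin m) ℝ)
    (Θ : Matrix (Fin r) (Fin r) ℝ) (hΘ : Θ = Xᵀ * A * X - Xᵀ * Δ * X)
    (ρ : ℝ) (hρ : 0 ≤ ρ)
    (htr : (1 - Uᵀ * X * Xᵀ * U).trace ≤ ρ) :
    frob (X * Θ * Xᵀ - A) ≤ 2 * Real.sqrt ρ + frob Δ := by
  have hXX : Xᵀ * X = 1 := hX
  have hUU : Uᵀ * U = 1 := hU
  have hd1 : ∀ i, d i ≤ 1 := fun i => MyAux.d_le_one h1 d (hSg ▸ hσ1) i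
  have hsymA : Aᵀ = A := by
    rw [hA, hSg]
    simp [Matrix.transpose_mul, Matrix.transpose_transpose, Matrix.diagonal_transpose,
      Matrix.mul_assoc]
  -- key bound : frob ((1 - X Xᵀ) A) ≤ √ρ
  have hkey : frob ((1 - X * Xᵀ) * A) ≤ Real.sqrt ρ := by
    apply Real.le_sqrt_of_sq_le
    rw [MyAux.frob_sq]
    have e1 : ((1 - X * Xᵀ) * A)ᵀ * ((1 - X * Xᵀ) * A) = A * ((1 - X * Xᵀ) * A) := by
      rw [Matrix.transpose_mul, hsymA]
      calc A * (1 - X * Xᵀ)ᵀ * ((1 - X * Xᵀ) * A)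
          = A * (((1 - X * Xᵀ)ᵀ * (1 - X * Xᵀ)) * A) := by simp only [Matrix.mul_assoc]
        _ = A * ((1 - X * Xᵀ) * A) := by rw [MyAux.proj_key X hXX]
    rw [e1]
    have e2 : A * ((1 - X * Xᵀ) * A)
        = U * (Sg * (Uᵀ * (1 - X * Xᵀ) * U) * Sg * Uᵀ) := by
      rw [hA]
      simp only [Matrix.mul_assoc]
    rw [e2, Matrix.trace_mul_comm]
    have e3 : Sg * (Uᵀ * (1 - X * Xᵀ) * U) * Sg * Uᵀ * U
        = Sg * (Uᵀ * (1 - X * Xᵀ) * U) * Sg := by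
      rw [Matrix.mul_assoc, hUU, Matrix.mul_one]
    rw [e3]
    have hMpsd : (Uᵀ * (1 - X * Xᵀ) * U).PosSemidef :=
      MyAux.psd_conj (MyAux.psd_one_sub_proj X hXX) U
    have h4 : (Sg * (Uᵀ * (1 - X * Xᵀ) * U) * Sg).trace
        ≤ (Uᵀ * (1 - X * Xᵀ) * U).trace := by
      rw [hSg]
      exact MyAux.trace_sandwich d (fun i => (hd i).le) hd1 hMpsd
    have h5 : (Uᵀ * (1 - X * Xᵀ) * U).trace ≤ ρ := by
      have e4 : Uᵀ * (1 - X * Xᵀ) * U = 1 - Uᵀ * X * Xᵀ * U := by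
        rw [Matrix.mul_sub, Matrix.mul_one, Matrix.sub_mul, hUU]
        simp only [Matrix.mul_assoc]
      rw [e4]
      exact htr
    linarith
  -- decomposition
  have hdecomp : X * Θ * Xᵀ - A
      = X * Xᵀ * (A * (X * Xᵀ - 1)) + (X * Xᵀ - 1) * A + -(X * Xᵀ * (Δ * (X * Xᵀ))) := by
    rw [hΘ]
    simp only [Matrix.mul_sub, Matrix.sub_mul, Matrix.mul_assoc, Matrix.mul_one,
      Matrix.one_mul]
    abel
  rw [hdecomp]
  have t1 : frob (X * Xᵀ * (A * (X * Xᵀ - 1))) ≤ Real.sqrt ρ := by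
    calc frob (X * Xᵀ * (A * (X * Xᵀ - 1))) ≤ frob (A * (X * Xᵀ - 1)) :=
          MyAux.frob_proj_left X hXX _
      _ = frob ((X * Xᵀ - 1) * A) := by
          rw [← MyAux.frob_transpose (A * (X * Xᵀ - 1))]
          congr 1
          rw [Matrix.transpose_mul, hsymA]
          congr 1
          simp [Matrix.transpose_sub, Matrix.transpose_mul, Matrix.transpose_one]
      _ = frob ((1 - X * Xᵀ) * A) := by
          rw [show (X * Xᵀ - 1) * A = -((1 - X * Xᵀ) * A) by
            simp [Matrix.sub_mul, Matrix.one_mul]]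
          exact MyAux.frob_neg _
      _ ≤ Real.sqrt ρ := hkey
  have t2 : frob ((X * Xᵀ - 1) * A) ≤ Real.sqrt ρ := by
    calc frob ((X * Xᵀ - 1) * A) = frob ((1 - X * Xᵀ) * A) := by
          rw [show (X * Xᵀ - 1) * A = -((1 - X * Xᵀ) * A) by
            simp [Matrix.sub_mul, Matrix.one_mul]]
          exact MyAux.frob_neg _
      _ ≤ Real.sqrt ρ := hkey
  have t3 : frob (X * Xᵀ * (Δ * (X * Xᵀ))) ≤ frob Δ := by
    calc frob (X * Xᵀ * (Δ * (X * Xᵀ))) ≤ frob (Δ * (X * Xᵀ)) :=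
          MyAux.frob_proj_left X hXX _
      _ ≤ frob Δ := MyAux.frob_proj_right X hXX Δ
  calc frob (X * Xᵀ * (A * (X * Xᵀ - 1)) + (X * Xᵀ - 1) * A + -(X * Xᵀ * (Δ * (X * Xᵀ))))
      ≤ frob (X * Xᵀ * (A * (X * Xᵀ - 1)) + (X * Xᵀ - 1) * A)
        + frob (-(X * Xᵀ * (Δ * (X * Xᵀ)))) := MyAux.frob_add_le _ _
    _ ≤ frob (X * Xᵀ * (A * (X * Xᵀ - 1))) + frob ((X * Xᵀ - 1) * A)
        + frob (X * Xᵀ * (Δ * (X * Xᵀ))) := by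
          rw [MyAux.frob_neg]
          have := MyAux.frob_add_le (X * Xᵀ * (A * (X * Xᵀ - 1))) ((X * Xᵀ - 1) * A)
          linarith
    _ ≤ 2 * Real.sqrt ρ + frob Δ := by linarith


end
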